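/- With the setup of the parsing lemma, one can choose words x̂₁ ∈ {x₁, x₁b₁, a₁x₁, a₁x₁b₁} and x̂₂ ∈ {x₂, x₂b₂, a₂x₂, a₂x₂b₂} such that x̂₁ ∼ x̂₂. -/

import Mathlib

/-- The image of 0 under the morphism: 0740103050260. -/
def f0 : List (Fin 8) := [0,7,4,0,1,0,3,0,5,0,2,6,0]

/-- The cyclic shift morphism σ, sending each letter a to a+1 (mod 8). -/
def sigmaW (w : List (Fin 8)) : List (Fin 8) := w.map (· + 1)

/-- The image of a letter under the cyclic morphism f: f(a) = σ^a(f(0)). -/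
def fL (a : Fin 8) : List (Fin 8) := f0.map (· + a)

/-- The morphism f extended to words. -/
def fW (w : List (Fin 8)) : List (Fin 8) := w.flatMap fL

/-- f^n(0). -/
def fIter (n : ℕ) : List (Fin 8) := fW^[n] [0]

/-- u is a factor of the fixed point f^ω(0): since f^n(0) is a prefix of
f^{n+1}(0), this holds iff u is a factor of some f^n(0). -/
def FactorFP (u : List (Fin 8)) : Prop := ∃ n, u <:+: fIter n

/-- A letter of Σ ∪ {ε} viewed as a word. -/
def optL (a : Option (Fin 8)) : List (Fin 8) := a.elim [] (fun x => [x])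

/-- The image under f of an element of Σ ∪ {ε}. -/
def imgF (a : Option (Fin 8)) : List (Fin 8) := a.elim [] fL

lemma add_right_inj8 (a : Fin 8) : Function.Injective (· + a) := fun x y h => by
  simpa using congrArg (· - a) h

lemma count_fL (a c : Fin 8) : (fL a).count c = if a = c then 6 else 1 := by
  have h : (f0.map (· + a)).count ((c - a) + a) = f0.count (c - a) :=
    List.count_map_of_injective f0 (· + a) (add_right_inj8 a) (c - a)
  rw [show c - a + a = c by simp] at h
  rw [fL, h]
  have : f0.count (c - a) = if c - a = 0 then 6 else 1 := by revert c a; decide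
  rw [this]
  congr 1
  simp only [eq_iff_iff, sub_eq_zero]
  constructor <;> intro h <;> simp [h]

lemma count_fW (x : List (Fin 8)) (c : Fin 8) :
    (fW x).count c = x.length + 5 * x.count c := by
  induction x with
  | nil => simp [fW]
  | cons a t ih =>
    rw [fW, List.flatMap_cons, List.count_append, ← fW, ih, count_fL, List.count_cons]
    by_cases h : a = c <;> simp [h] <;> omega

lemma length_fW (x : List (Fin 8)) : (fW x).length = 13 * x.length := by
  induction x with
  | nil => simp [fW]
  | cons a t ih =>
    rw [fW, List.flatMap_cons, List.length_append, ← fW, ih]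
    simp [fL, f0]; ring

lemma count_pref (a c : Fin 8) (p : List (Fin 8)) (hp : p <+: fL a) (h12 : p.length ≤ 12) :
    p.count c ≤ if a = c then 5 else 1 := by
  by_cases h : a = c
  · rw [if_pos h]; subst h
    have hpt : p <+: (fL a).take 12 := List.prefix_take_iff.mpr ⟨hp, h12⟩
    calc p.count a ≤ ((fL a).take 12).count a := hpt.sublist.count_le a
      _ = 5 := by
        have : (fL a).take 12 = (f0.take 12).map (· + a) := by rw [fL, List.map_take]
        rw [this]
        have h2 := List.count_map_of_injective (f0.take 12) (· + a) (add_right_inj8 a) 0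
        simpa using h2.trans (show (f0.take 12).count 0 = 5 by decide)
  · rw [if_neg h]
    calc p.count c ≤ (fL a).count c := hp.sublist.count_le c
      _ = 1 := by rw [count_fL, if_neg h]

lemma count_suff (a c : Fin 8) (s : List (Fin 8)) (hs : s <:+ fL a) (h12 : s.length ≤ 12) :
    s.count c ≤ if a = c then 5 else 1 := by
  have hrev : s.reverse <+: (fL a).reverse := List.reverse_prefix.mpr hs
  have hr : (fL a).reverse = f0.reverse.map (· + a) := by rw [fL, List.map_reverse]
  rw [← List.count_reverse]
  by_cases h : a = c
  · rw [if_pos h]; subst h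
    have hpt : s.reverse <+: ((fL a).reverse).take 12 :=
      List.prefix_take_iff.mpr ⟨hrev, by simpa using h12⟩
    calc s.reverse.count a ≤ (((fL a).reverse).take 12).count a := hpt.sublist.count_le a
      _ = 5 := by
        rw [hr, ← List.map_take]
        have h2 := List.count_map_of_injective (f0.reverse.take 12) (· + a) (add_right_inj8 a) 0
        simpa using h2.trans (show (f0.reverse.take 12).count 0 = 5 by decide)
  · rw [if_neg h]
    calc s.reverse.count c ≤ (fL a).reverse.count c := hrev.sublist.count_le c
      _ = 1 := by rw [List.count_reverse, count_fL, if_neg h]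

def ind (a : Option (Fin 8)) (c : Fin 8) : ℤ := if a = some c then 1 else 0

lemma core (e : Fin 8 → ℤ) (a₁ b₁ a₂ b₂ : Option (Fin 8))
    (h : ∀ c, -(ind a₂ c + ind b₂ c) ≤ e c ∧ e c ≤ ind a₁ c + ind b₁ c) :
    ∃ α₁ β₁ α₂ β₂ : Bool,
      ∀ c, (if α₁ = true ∧ a₁ = some c then (1:ℤ) else 0)
         + (if β₁ = true ∧ b₁ = some c then 1 else 0)
         - (if α₂ = true ∧ a₂ = some c then 1 else 0)
         - (if β₂ = true ∧ b₂ = some c then 1 else 0) = e c := by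
  refine ⟨a₁.elim false (fun d => decide (1 ≤ e d)),
          b₁.elim false (fun d => decide ((if a₁ = some d then 2 else 1) ≤ e d)),
          a₂.elim false (fun d => decide (e d ≤ -1)),
          b₂.elim false (fun d => decide (e d ≤ if a₂ = some d then -2 else -1)), ?_⟩
  intro c
  have hc := h c
  by_cases h1 : a₁ = some c <;> by_cases h2 : b₁ = some c <;>
    by_cases h3 : a₂ = some c <;> by_cases h4 : b₂ = some c <;>
    simp only [ind, h1, h2, h3, h4, Option.elim_some, Option.some.injEq,
      decide_eq_true_eq, if_true, if_false, ite_true, ite_false, ite_self,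
      and_true, and_false, true_and, false_and, eq_self_iff_true] at hc ⊢ <;>
    (try split_ifs) <;> omega

theorem stmt7
(X₁ X₂ x₁ x₂ p₁ p₂ s₁ s₂ : List (Fin 8))
    (a₁ a₂ b₁ b₂ : Option (Fin 8))
    (hperm : X₁.Perm X₂)
    (hX1 : X₁ = s₁ ++ fW x₁ ++ p₁) (hX2 : X₂ = s₂ ++ fW x₂ ++ p₂)
    (hp1 : p₁ <+: imgF a₁) (hp1len : p₁.length ≤ 12)
    (hp2 : p₂ <+: imgF a₂) (hp2len : p₂.length ≤ 12)
    (hs1 : s₁ <:+ imgF b₁) (hs1len : s₁.length ≤ 12)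
    (hs2 : s₂ <:+ imgF b₂) (hs2len : s₂.length ≤ 12) :
    ∃ u v : List (Fin 8),
      (u = x₁ ∨ u = x₁ ++ optL b₁ ∨ u = optL a₁ ++ x₁ ∨ u = optL a₁ ++ x₁ ++ optL b₁) ∧
      (v = x₂ ∨ v = x₂ ++ optL b₂ ∨ v = optL a₂ ++ x₂ ∨ v = optL a₂ ++ x₂ ++ optL b₂) ∧
      u.Perm v := by
  have countX : ∀ c : Fin 8, s₁.count c + (x₁.length + 5 * x₁.count c) + p₁.count c
      = s₂.count c + (x₂.length + 5 * x₂.count c) + p₂.count c := by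
    intro c
    have h := hperm.count_eq c
    rw [hX1, hX2] at h
    simp [List.count_append, count_fW] at h
    omega
  have hlen : s₁.length + 13 * x₁.length + p₁.length
      = s₂.length + 13 * x₂.length + p₂.length := by
    have h := hperm.length_eq
    rw [hX1, hX2] at h
    simp [List.length_append, length_fW] at h
    omega
  have hπ₁ : ∀ c : Fin 8, p₁.count c ≤ if a₁ = some c then 5 else 1 := by
    intro c
    rcases a₁ with _ | A
    · have : p₁ = [] := List.prefix_nil.mp hp1
      simp [this]
    · have := count_pref A c p₁ hp1 hp1len
      split_ifs at this ⊢ <;> simp_all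
  have hπ₂ : ∀ c : Fin 8, p₂.count c ≤ if a₂ = some c then 5 else 1 := by
    intro c
    rcases a₂ with _ | A
    · have : p₂ = [] := List.prefix_nil.mp hp2
      simp [this]
    · have := count_pref A c p₂ hp2 hp2len
      split_ifs at this ⊢ <;> simp_all
  have hσ₁ : ∀ c : Fin 8, s₁.count c ≤ if b₁ = some c then 5 else 1 := by
    intro c
    rcases b₁ with _ | B
    · have : s₁ = [] := List.suffix_nil.mp hs1
      simp [this]
    · have := count_suff B c s₁ hs1 hs1len
      split_ifs at this ⊢ <;> simp_all
  have hσ₂ : ∀ c : Fin 8, s₂.count c ≤ if b₂ = some c then 5 else 1 := by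
    intro c
    rcases b₂ with _ | B
    · have : s₂ = [] := List.suffix_nil.mp hs2
      simp [this]
    · have := count_suff B c s₂ hs2 hs2len
      split_ifs at this ⊢ <;> simp_all
  have hbound : ∀ c : Fin 8,
      -(ind a₂ c + ind b₂ c) ≤ ((x₂.count c : ℤ) - x₁.count c) ∧
      ((x₂.count c : ℤ) - x₁.count c) ≤ ind a₁ c + ind b₁ c := by
    intro c
    have h1 := countX c
    have h2 := hπ₁ c
    have h3 := hπ₂ c
    have h4 := hσ₁ c
    have h5 := hσ₂ c
    unfold ind
    split_ifs at * <;> omega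
  obtain ⟨α₁, β₁, α₂, β₂, hk⟩ :=
    core (fun c => (x₂.count c : ℤ) - x₁.count c) a₁ b₁ a₂ b₂ hbound
  have hopt : ∀ (o : Option (Fin 8)) (c : Fin 8),
      (optL o).count c = if o = some c then 1 else 0 := by
    rintro (_ | x) c
    · simp [optL]
    · simp only [optL, Option.elim_some, List.count_singleton', Option.some.injEq]
  refine ⟨cond α₁ (optL a₁) [] ++ x₁ ++ cond β₁ (optL b₁) [],
          cond α₂ (optL a₂) [] ++ x₂ ++ cond β₂ (optL b₂) [], ?_, ?_, ?_⟩
  · cases α₁ <;> cases β₁ <;> simp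
  · cases α₂ <;> cases β₂ <;> simp
  · rw [List.perm_iff_count]
    intro c
    have h := hk c
    have e1 : (cond α₁ (optL a₁) []).count c = if α₁ = true ∧ a₁ = some c then 1 else 0 := by
      cases α₁ <;> simp [hopt]
    have e2 : (cond β₁ (optL b₁) []).count c = if β₁ = true ∧ b₁ = some c then 1 else 0 := by
      cases β₁ <;> simp [hopt]
    have e3 : (cond α₂ (optL a₂) []).count c = if α₂ = true ∧ a₂ = some c then 1 else 0 := by
      cases α₂ <;> simp [hopt]
    have e4 : (cond β₂ (optL b₂) []).count c = if β₂ = true ∧ b₂ = some c then 1 else 0 := by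
      cases β₂ <;> simp [hopt]
    simp only [List.count_append, e1, e2, e3, e4]
    split_ifs at h ⊢ <;> omega
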